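/- arXiv:cs/0303001 — 3 statements merged into one kernel-verified Lean document; each statement's English description precedes it below -/
import Mathlib

section
/- If a metric D' ε-approximates a metric D on a finite point set P (meaning: for all p,q,r,s ∈ P, D'(p,q) ≤ D'(r,s) implies D(p,q) ≤ (1+ε)·D(r,s)), and T' is a minimum spanning tree of P under D', then the total D-weight of T' is at most (1+ε) times the total D-weight of a minimum spanning tree of P under D. -/
open scoped Classical

/-- The weight of (the edges of) a graph `G` on a finite vertex set under an
edge-weight function `w`. -/
noncomputable def treeWeight {V : Type*} [Fintype V] (w : Sym2 V → ℝ)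
    (G : SimpleGraph V) : ℝ :=
  ∑ e ∈ (Set.toFinite G.edgeSet).toFinset, w e

section Helpers

open SimpleGraph

variable {V : Type*}

lemma walk_delete_aux {G : SimpleGraph V} {a b u v : V} (p : G.Walk u v) :
    (G \ fromEdgeSet {s(a,b)}).Reachable u v ∨
    ((G \ fromEdgeSet {s(a,b)}).Reachable u a ∧ (G \ fromEdgeSet {s(a,b)}).Reachable b v) ∨
    ((G \ fromEdgeSet {s(a,b)}).Reachable u b ∧ (G \ fromEdgeSet {s(a,b)}).Reachable a v) := by
  set H := G \ fromEdgeSet {s(a,b)} with hH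
  induction p with
  | nil => exact Or.inl (Reachable.refl _)
  | @cons u c v h q ih =>
    by_cases he : s(u, c) = s(a, b)
    · rw [Sym2.eq_iff] at he
      rcases he with ⟨rfl, rfl⟩ | ⟨rfl, rfl⟩
      · rcases ih with h1 | ⟨h1, h2⟩ | ⟨h1, h2⟩
        · exact Or.inr (Or.inl ⟨Reachable.refl _, h1⟩)
        · exact Or.inr (Or.inl ⟨Reachable.refl _, h2⟩)
        · exact Or.inl h2
      · rcases ih with h1 | ⟨h1, h2⟩ | ⟨h1, h2⟩
        · exact Or.inr (Or.inr ⟨Reachable.refl _, h1⟩)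
        · exact Or.inl h2
        · exact Or.inr (Or.inr ⟨Reachable.refl _, h2⟩)
    · have hadj : H.Adj u c := by
        rw [hH]; simp [h, he, h.ne]
      have hr : H.Reachable u c := hadj.reachable
      rcases ih with h1 | ⟨h1, h2⟩ | ⟨h1, h2⟩
      · exact Or.inl (hr.trans h1)
      · exact Or.inr (Or.inl ⟨hr.trans h1, h2⟩)
      · exact Or.inr (Or.inr ⟨hr.trans h1, h2⟩)

lemma connected_delete {G : SimpleGraph V} (h : G.Connected) {a b : V}
    (hr : (G \ fromEdgeSet {s(a,b)}).Reachable a b) :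
    (G \ fromEdgeSet {s(a,b)}).Connected := by
  haveI : Nonempty V := h.nonempty
  refine ⟨fun u v => ?_⟩
  rcases walk_delete_aux (a := a) (b := b) (h.preconnected u v).some with h1 | ⟨h1, h2⟩ | ⟨h1, h2⟩
  · exact h1
  · exact (h1.trans hr).trans h2
  · exact (h1.trans hr.symm).trans h2

lemma edgeSet_delete (G : SimpleGraph V) (e : Sym2 V) :
    (G \ fromEdgeSet {e}).edgeSet = G.edgeSet \ {e} := by
  simp [edgeSet_sdiff, edgeSet_fromEdgeSet, edgeSet_sdiff_sdiff_isDiag]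


lemma tree_ncard [Fintype V] {G : SimpleGraph V} (hG : G.IsTree) :
    G.edgeSet.ncard + 1 = Fintype.card V := by
  rw [Set.ncard_eq_toFinset_card' G.edgeSet]
  exact hG.card_edgeFinset

lemma card_le_of_connected [Fintype V] : ∀ n (G : SimpleGraph V), G.edgeSet.ncard = n →
    G.Connected → Fintype.card V ≤ G.edgeSet.ncard + 1 := by
  intro n
  induction n using Nat.strong_induction_on with
  | _ n ih =>
    intro G hn h
    by_cases hac : G.IsAcyclic
    · exact le_of_eq (tree_ncard ⟨h, hac⟩).symm
    · rw [SimpleGraph.isAcyclic_iff_forall_adj_isBridge] at hac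
      push_neg at hac
      obtain ⟨a, b, hadj, hnb⟩ := hac
      rw [SimpleGraph.isBridge_iff] at hnb
      push_neg at hnb
      have hr : (G \ fromEdgeSet {s(a,b)}).Reachable a b := hnb
      have hconn := connected_delete h hr
      have hmem : s(a, b) ∈ G.edgeSet := hadj
      have hpos : 1 ≤ n := by
        rw [← hn]
        exact (Set.ncard_pos (Set.toFinite _)).2 ⟨_, hmem⟩
      have hcard : (G \ fromEdgeSet {s(a,b)}).edgeSet.ncard = n - 1 := by
        rw [edgeSet_delete, Set.ncard_diff_singleton_of_mem hmem, hn]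
      have := ih (n - 1) (by omega) _ hcard hconn
      omega

lemma isTree_of_connected_card [Fintype V] (G : SimpleGraph V) (h : G.Connected)
    (hc : G.edgeSet.ncard + 1 = Fintype.card V) : G.IsTree := by
  refine ⟨h, ?_⟩
  by_contra hac
  rw [SimpleGraph.isAcyclic_iff_forall_adj_isBridge] at hac
  push_neg at hac
  obtain ⟨a, b, hadj, hnb⟩ := hac
  rw [SimpleGraph.isBridge_iff] at hnb
  push_neg at hnb
  have hr : (G \ fromEdgeSet {s(a,b)}).Reachable a b := hnb
  have hconn := connected_delete h hr
  have hmem : s(a, b) ∈ G.edgeSet := hadj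
  have hpos : 1 ≤ G.edgeSet.ncard :=
    (Set.ncard_pos (Set.toFinite _)).2 ⟨_, hmem⟩
  have hcard : (G \ fromEdgeSet {s(a,b)}).edgeSet.ncard = G.edgeSet.ncard - 1 := by
    rw [edgeSet_delete, Set.ncard_diff_singleton_of_mem hmem]
  have := card_le_of_connected _ _ hcard hconn
  omega

lemma crossing {S : SimpleGraph V} (R : V → Prop) {u v : V} (p : S.Walk u v)
    (hp : p.IsPath) (hu : R u) (hv : ¬R v) :
    ∃ x y, S.Adj x y ∧ R x ∧ ¬R y ∧
      (S \ fromEdgeSet {s(x,y)}).Reachable u x ∧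
      (S \ fromEdgeSet {s(x,y)}).Reachable y v := by
  induction p with
  | nil => exact absurd hu hv
  | @cons u c v h q ih =>
    rw [SimpleGraph.Walk.cons_isPath_iff] at hp
    by_cases hc : R c
    · obtain ⟨x, y, hxy, hRx, hRy, h1, h2⟩ := ih hp.1 hc hv
      have hne : s(u, c) ≠ s(x, y) := by
        intro h'
        rw [Sym2.eq_iff] at h'
        rcases h' with ⟨rfl, rfl⟩ | ⟨rfl, rfl⟩
        · exact hRy hc
        · exact hRy hu
      have hadj : (S \ fromEdgeSet {s(x,y)}).Adj u c := by
        simp [h, hne, h.ne]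
      exact ⟨x, y, hxy, hRx, hRy, hadj.reachable.trans h1, h2⟩
    · refine ⟨u, c, h, hu, hc, Reachable.refl _, ?_⟩
      have hq : s(u, c) ∉ q.edges := fun he =>
        hp.2 (SimpleGraph.Walk.fst_mem_support_of_mem_edges q he)
      refine ⟨q.transfer _ fun e ep => ?_⟩
      have h1 : e ∈ S.edgeSet := q.edges_subset_edgeSet ep
      have h2 : e ≠ s(u, c) := fun h' => hq (h' ▸ ep)
      simp only [edgeSet_sdiff, edgeSet_fromEdgeSet, edgeSet_sdiff_sdiff_isDiag,
        Set.mem_diff, Set.mem_singleton_iff]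
      exact ⟨h1, h2⟩

lemma edgeSet_swap [Fintype V] (G : SimpleGraph V) (e : Sym2 V) {x y : V} (hxy : x ≠ y) :
    ((G \ fromEdgeSet {e}) ⊔ fromEdgeSet {s(x,y)}).edgeSet
      = insert s(x,y) (G.edgeSet \ {e}) := by
  rw [edgeSet_sup, edgeSet_delete, edgeSet_fromEdgeSet]
  have h1 : ({s(x,y)} : Set (Sym2 V)) \ {e : Sym2 V | e.IsDiag} = {s(x,y)} := by
    ext g
    simp only [Set.mem_diff, Set.mem_singleton_iff, Set.mem_setOf_eq, and_iff_left_iff_imp]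
    rintro rfl
    simp [hxy]
  rw [Sym2.diagSet_eq_setOfPred_isDiag, h1, Set.union_singleton]

lemma exchange [Fintype V] {T S : SimpleGraph V} (hT : T.IsTree) (hS : S.IsTree)
    {a b : V} (he : T.Adj a b) (heS : s(a,b) ∉ S.edgeSet) :
    ∃ x y : V, S.Adj x y ∧ s(x,y) ∉ T.edgeSet ∧
      ((T \ fromEdgeSet {s(a,b)}) ⊔ fromEdgeSet {s(x,y)}).IsTree ∧
      ((S \ fromEdgeSet {s(x,y)}) ⊔ fromEdgeSet {s(a,b)}).IsTree := by
  have hab : a ≠ b := he.ne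
  have hbridge : ¬(T \ fromEdgeSet {s(a,b)}).Reachable a b := by
    have h1 := (isAcyclic_iff_forall_adj_isBridge.1 hT.2) he
    rw [isBridge_iff] at h1
    exact h1
  set R : V → Prop := fun v => (T \ fromEdgeSet {s(a,b)}).Reachable a v with hRdef
  have hclass : ∀ v, R v ∨ (T \ fromEdgeSet {s(a,b)}).Reachable b v := by
    intro v
    rcases walk_delete_aux (a := a) (b := b) (hT.1.preconnected a v).some with
      h1 | ⟨h1, h2⟩ | ⟨h1, h2⟩
    · exact Or.inl h1
    · exact Or.inr h2
    · exact absurd h1 hbridge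
  obtain ⟨p, hp, -⟩ := hS.existsUnique_path a b
  obtain ⟨x, y, hxy, hRx, hRy, hax, hyb⟩ :=
    crossing R p hp (Reachable.refl a) hbridge
  have hfe : s(x,y) ≠ s(a,b) := fun h => heS (h ▸ S.mem_edgeSet.2 hxy)
  have hfT : s(x,y) ∉ T.edgeSet := by
    intro hmem
    have hTxy : T.Adj x y := T.mem_edgeSet.1 hmem
    have hadj : (T \ fromEdgeSet {s(a,b)}).Adj x y := by
      simp [hTxy, hfe, hTxy.ne]
    exact hRy (hRx.trans hadj.reachable)
  refine ⟨x, y, hxy, hfT, ?_, ?_⟩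
  · -- T2 is a tree
    set T2 := (T \ fromEdgeSet {s(a,b)}) ⊔ fromEdgeSet {s(x,y)} with hT2def
    have hle1 : (T \ fromEdgeSet {s(a,b)}) ≤ T2 := le_sup_left
    have hfadj : T2.Adj x y := by
      refine (sup_adj _ _ _ _).2 (Or.inr ?_)
      simp [hxy.ne]
    have hby : (T \ fromEdgeSet {s(a,b)}).Reachable b y := by
      rcases hclass y with h1 | h1
      · exact absurd h1 hRy
      · exact h1
    have hreach_ab : T2.Reachable a b :=
      ((hRx.mono hle1).trans hfadj.reachable).trans ((hby.mono hle1).symm)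
    have hkey : ∀ v, T2.Reachable a v := by
      intro v
      rcases hclass v with h1 | h1
      · exact h1.mono hle1
      · exact hreach_ab.trans (h1.mono hle1)
    have hconn : T2.Connected := by
      haveI : Nonempty V := hT.1.nonempty
      exact ⟨fun u v => (hkey u).symm.trans (hkey v)⟩
    refine isTree_of_connected_card _ hconn ?_
    rw [hT2def, edgeSet_swap _ _ hxy.ne]
    have h1 : s(x,y) ∉ T.edgeSet \ {s(a,b)} := fun h => hfT h.1
    have h2 : s(a,b) ∈ T.edgeSet := T.mem_edgeSet.2 he
    rw [Set.ncard_insert_of_notMem h1 ((Set.toFinite _).diff),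
      Set.ncard_diff_singleton_of_mem h2]
    have h3 := tree_ncard hT
    have h4 : 1 ≤ T.edgeSet.ncard := (Set.ncard_pos (Set.toFinite _)).2 ⟨_, h2⟩
    omega
  · -- S2 is a tree
    set S2 := (S \ fromEdgeSet {s(x,y)}) ⊔ fromEdgeSet {s(a,b)} with hS2def
    have hle2 : (S \ fromEdgeSet {s(x,y)}) ≤ S2 := le_sup_left
    have headj : S2.Adj a b := by
      refine (sup_adj _ _ _ _).2 (Or.inr ?_)
      simp [hab]
    have hxy2 : S2.Reachable x y :=
      (((hax.mono hle2).symm.trans headj.reachable).trans ((hyb.mono hle2).symm))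
    have hconn : S2.Connected := by
      haveI : Nonempty V := hS.1.nonempty
      refine ⟨fun u v => ?_⟩
      rcases walk_delete_aux (a := x) (b := y) (hS.1.preconnected u v).some with
        h1 | ⟨h1, h2⟩ | ⟨h1, h2⟩
      · exact h1.mono hle2
      · exact ((h1.mono hle2).trans hxy2).trans (h2.mono hle2)
      · exact ((h1.mono hle2).trans hxy2.symm).trans (h2.mono hle2)
    refine isTree_of_connected_card _ hconn ?_
    rw [hS2def, edgeSet_swap _ _ hab]
    have h1 : s(a,b) ∉ S.edgeSet \ {s(x,y)} := fun h => heS h.1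
    have h2 : s(x,y) ∈ S.edgeSet := S.mem_edgeSet.2 hxy
    rw [Set.ncard_insert_of_notMem h1 ((Set.toFinite _).diff),
      Set.ncard_diff_singleton_of_mem h2]
    have h3 := tree_ncard hS
    have h4 : 1 ≤ S.edgeSet.ncard := (Set.ncard_pos (Set.toFinite _)).2 ⟨_, h2⟩
    omega
lemma exists_bij [Fintype V] (w' : Sym2 V → ℝ) {T : SimpleGraph V} (hT : T.IsTree)
    (hmin : ∀ G : SimpleGraph V, G.IsTree →
      ∑ e ∈ (Set.toFinite T.edgeSet).toFinset, w' e
        ≤ ∑ e ∈ (Set.toFinite G.edgeSet).toFinset, w' e) :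
    ∀ (k : ℕ) (S : SimpleGraph V), S.IsTree →
      ((Set.toFinite T.edgeSet).toFinset \ (Set.toFinite S.edgeSet).toFinset).card = k →
      ∃ σ : Sym2 V → Sym2 V,
        (∀ e ∈ T.edgeSet, σ e ∈ S.edgeSet) ∧
        (∀ e ∈ T.edgeSet, ∀ g ∈ T.edgeSet, σ e = σ g → e = g) ∧
        (∀ g ∈ S.edgeSet, ∃ e ∈ T.edgeSet, σ e = g) ∧
        (∀ e ∈ T.edgeSet, w' e ≤ w' (σ e)) := by
  intro k
  induction k using Nat.strong_induction_on with
  | _ k ih =>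
    intro S hS hk
    rcases Nat.eq_zero_or_pos k with rfl | hkpos
    · -- edge sets are equal
      have hsub : (Set.toFinite T.edgeSet).toFinset ⊆ (Set.toFinite S.edgeSet).toFinset :=
        Finset.sdiff_eq_empty_iff_subset.1 (Finset.card_eq_zero.1 hk)
      have hcardT : (Set.toFinite T.edgeSet).toFinset.card = T.edgeSet.ncard :=
        (Set.ncard_eq_toFinset_card _ _).symm
      have hcardS : (Set.toFinite S.edgeSet).toFinset.card = S.edgeSet.ncard :=
        (Set.ncard_eq_toFinset_card _ _).symm
      have hcards : (Set.toFinite S.edgeSet).toFinset.card ≤ (Set.toFinite T.edgeSet).toFinset.card := by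
        have h1 := tree_ncard hT
        have h2 := tree_ncard hS
        omega
      have heq := Finset.eq_of_subset_of_card_le hsub hcards
      have heqset : T.edgeSet = S.edgeSet := by
        rw [← Set.Finite.coe_toFinset (Set.toFinite T.edgeSet),
          ← Set.Finite.coe_toFinset (Set.toFinite S.edgeSet), heq]
      exact ⟨id, fun e he => heqset ▸ he, fun e _ g _ h => h,
        fun g hg => ⟨g, heqset ▸ hg, rfl⟩, fun e _ => le_refl _⟩
    · -- pick e in the difference
      have hne : ((Set.toFinite T.edgeSet).toFinset \ (Set.toFinite S.edgeSet).toFinset).Nonempty := by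
        rw [← Finset.card_pos, hk]; exact hkpos
      obtain ⟨e, hemem⟩ := hne
      rw [Finset.mem_sdiff, Set.Finite.mem_toFinset, Set.Finite.mem_toFinset] at hemem
      obtain ⟨heT, heS⟩ := hemem
      induction e using Sym2.ind with
      | _ a b =>
      have he : T.Adj a b := T.mem_edgeSet.1 heT
      obtain ⟨x, y, hxy, hfT, hT2, hS2⟩ := exchange hT hS he heS
      set f := s(x, y) with hfdef
      set eab := s(a, b) with heabdef
      have hfS : f ∈ S.edgeSet := S.mem_edgeSet.2 hxy
      have hfe : f ≠ eab := fun h => (h ▸ hfT) heT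
      set T2 := (T \ fromEdgeSet {eab}) ⊔ fromEdgeSet {f} with hT2def
      set S2 := (S \ fromEdgeSet {f}) ⊔ fromEdgeSet {eab} with hS2def
      have hT2es : T2.edgeSet = insert f (T.edgeSet \ {eab}) := edgeSet_swap _ _ hxy.ne
      have hS2es : S2.edgeSet = insert eab (S.edgeSet \ {f}) := edgeSet_swap _ _ he.ne
      -- w' eab ≤ w' f from minimality
      have hwef : w' eab ≤ w' f := by
        have hmin2 := hmin T2 hT2
        have hfin : (Set.toFinite T2.edgeSet).toFinset
            = insert f (((Set.toFinite T.edgeSet).toFinset).erase eab) := by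
          ext g
          simp only [Set.Finite.mem_toFinset, hT2es, Set.mem_insert_iff, Set.mem_diff,
            Set.mem_singleton_iff, Finset.mem_insert, Finset.mem_erase]
          tauto
        rw [hfin, Finset.sum_insert (by
            simp only [Finset.mem_erase, Set.Finite.mem_toFinset]
            exact fun h => hfT h.2),
          Finset.sum_erase_eq_sub ((Set.Finite.mem_toFinset _).2 heT)] at hmin2
        linarith
      -- cardinality of new difference
      have hcard2 : ((Set.toFinite T.edgeSet).toFinset \ (Set.toFinite S2.edgeSet).toFinset).card
          = k - 1 := by
        have hdiff : (Set.toFinite T.edgeSet).toFinset \ (Set.toFinite S2.edgeSet).toFinset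
            = ((Set.toFinite T.edgeSet).toFinset \ (Set.toFinite S.edgeSet).toFinset).erase eab := by
          ext g
          simp only [Finset.mem_sdiff, Set.Finite.mem_toFinset, Finset.mem_erase, hS2es,
            Set.mem_insert_iff, Set.mem_diff, Set.mem_singleton_iff]
          constructor
          · rintro ⟨h1, h2⟩
            push_neg at h2
            exact ⟨h2.1, h1, fun hgS => hfT ((h2.2 hgS) ▸ h1)⟩
          · rintro ⟨h1, h2, h3⟩
            refine ⟨h2, ?_⟩
            push_neg
            exact ⟨h1, fun hgS => absurd hgS h3⟩
        rw [hdiff, Finset.card_erase_of_mem (by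
          rw [Finset.mem_sdiff, Set.Finite.mem_toFinset, Set.Finite.mem_toFinset]
          exact ⟨heT, heS⟩), hk]
      obtain ⟨σ', hmap, hinj, hsurj, hw⟩ := ih (k - 1) (by omega) S2 hS2 hcard2
      have hfS2 : f ∉ S2.edgeSet := by
        rw [hS2es]
        rintro (h | h)
        · exact hfe h
        · exact h.2 rfl
      have heS2 : eab ∈ S2.edgeSet := by rw [hS2es]; exact Set.mem_insert _ _
      obtain ⟨x0, hx0T, hx0⟩ := hsurj eab heS2
      refine ⟨fun z => if σ' z = eab then f else σ' z, ?_, ?_, ?_, ?_⟩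
      · intro z hz
        by_cases h : σ' z = eab
        · simpa [h] using hfS
        · have := hmap z hz
          rw [hS2es] at this
          rcases this with h' | h'
          · exact absurd h' h
          · simpa [h] using h'.1
      · intro z hz g hg hzg
        by_cases h1 : σ' z = eab <;> by_cases h2 : σ' g = eab
        · exact hinj z hz g hg (h1.trans h2.symm)
        · simp only [h1, if_pos, if_neg h2, if_true] at hzg
          exact absurd (hzg ▸ hmap g hg : f ∈ S2.edgeSet) hfS2
        · simp only [h2, if_neg h1, if_true] at hzg
          exact absurd (hzg ▸ hmap z hz : f ∈ S2.edgeSet) hfS2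
        · simp only [if_neg h1, if_neg h2] at hzg
          exact hinj z hz g hg hzg
      · intro g hg
        by_cases h : g = f
        · refine ⟨x0, hx0T, ?_⟩
          simp [hx0, h]
        · have hgS2 : g ∈ S2.edgeSet := by
            rw [hS2es]
            exact Set.mem_insert_iff.2 (Or.inr ⟨hg, h⟩)
          obtain ⟨z, hzT, hz⟩ := hsurj g hgS2
          have hgne : g ≠ eab := fun h' => heS (h' ▸ hg)
          refine ⟨z, hzT, ?_⟩
          have hne' : σ' z ≠ eab := by rw [hz]; exact hgne
          exact (if_neg hne').trans hz
      · intro z hz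
        by_cases h : σ' z = eab
        · have := hw z hz
          rw [h] at this
          simpa [h] using this.trans hwef
        · simpa [h] using hw z hz


lemma lift_approx {ε : ℝ} (D D' : V → V → ℝ)
    (hDsymm : ∀ a b, D a b = D b a) (hD'symm : ∀ a b, D' a b = D' b a)
    (happrox : ∀ p q r s : V, D' p q ≤ D' r s → D p q ≤ (1 + ε) * D r s)
    (e f : Sym2 V)
    (h : Sym2.lift ⟨D', hD'symm⟩ e ≤ Sym2.lift ⟨D', hD'symm⟩ f) :
    Sym2.lift ⟨D, hDsymm⟩ e ≤ (1 + ε) * Sym2.lift ⟨D, hDsymm⟩ f := by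
  induction e using Sym2.ind with
  | _ p q =>
    induction f using Sym2.ind with
    | _ r s =>
      simp only [Sym2.lift_mk] at h ⊢
      exact happrox p q r s h


end Helpers

/-- If `D'` ε-approximates `D` (i.e. `D'(p,q) ≤ D'(r,s)` implies
`D(p,q) ≤ (1+ε)·D(r,s)`), and `T'` is a minimum spanning tree under `D'` while
`Topt` is a minimum spanning tree under `D`, then the `D`-weight of `T'` is at
most `(1+ε)` times the `D`-weight of `Topt`. -/
theorem mst_of_approx_metric {V : Type*} [Fintype V] (ε : ℝ) (hε : 0 ≤ ε)
    (D D' : V → V → ℝ)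
    (hDsymm : ∀ a b, D a b = D b a) (hD'symm : ∀ a b, D' a b = D' b a)
    (hDnonneg : ∀ a b, 0 ≤ D a b) (hD'nonneg : ∀ a b, 0 ≤ D' a b)
    (happrox : ∀ p q r s : V, D' p q ≤ D' r s → D p q ≤ (1 + ε) * D r s)
    (T' Topt : SimpleGraph V) (hT' : T'.IsTree) (hTopt : Topt.IsTree)
    (hmin' : ∀ G : SimpleGraph V, G.IsTree →
      treeWeight (Sym2.lift ⟨D', hD'symm⟩) T' ≤ treeWeight (Sym2.lift ⟨D', hD'symm⟩) G)
    (hmin : ∀ G : SimpleGraph V, G.IsTree →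
      treeWeight (Sym2.lift ⟨D, hDsymm⟩) Topt ≤ treeWeight (Sym2.lift ⟨D, hDsymm⟩) G) :
    treeWeight (Sym2.lift ⟨D, hDsymm⟩) T'
      ≤ (1 + ε) * treeWeight (Sym2.lift ⟨D, hDsymm⟩) Topt := by
  set w' : Sym2 V → ℝ := Sym2.lift ⟨D', hD'symm⟩ with hw'def
  set w : Sym2 V → ℝ := Sym2.lift ⟨D, hDsymm⟩ with hwdef
  have hmin'' : ∀ G : SimpleGraph V, G.IsTree →
      ∑ e ∈ (Set.toFinite T'.edgeSet).toFinset, w' e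
        ≤ ∑ e ∈ (Set.toFinite G.edgeSet).toFinset, w' e := by
    intro G hG
    exact hmin' G hG
  obtain ⟨σ, hmap, hinj, hsurj, hwle⟩ :=
    exists_bij w' hT' hmin''
      ((Set.toFinite T'.edgeSet).toFinset \ (Set.toFinite Topt.edgeSet).toFinset).card
      Topt hTopt rfl
  have hsum : ∑ e ∈ (Set.toFinite T'.edgeSet).toFinset, w (σ e)
      = ∑ e ∈ (Set.toFinite Topt.edgeSet).toFinset, w e := by
    refine Finset.sum_bij (fun e _ => σ e) ?_ ?_ ?_ ?_
    · intro e he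
      rw [Set.Finite.mem_toFinset] at he ⊢
      exact hmap e he
    · intro e he g hg h
      rw [Set.Finite.mem_toFinset] at he hg
      exact hinj e he g hg h
    · intro g hg
      rw [Set.Finite.mem_toFinset] at hg
      obtain ⟨e, he, hse⟩ := hsurj g hg
      exact ⟨e, (Set.Finite.mem_toFinset _).2 he, hse⟩
    · intro e _
      rfl
  show ∑ e ∈ (Set.toFinite T'.edgeSet).toFinset, w e
      ≤ (1 + ε) * ∑ e ∈ (Set.toFinite Topt.edgeSet).toFinset, w e
  rw [← hsum, Finset.mul_sum]
  refine Finset.sum_le_sum ?_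
  intro e he
  rw [Set.Finite.mem_toFinset] at he
  exact lift_approx D D' hDsymm hD'symm happrox e (σ e) (hwle e he)
end

section
/- Exchange argument for spanning trees: let D and D' be distance functions on a finite set P such that D' ε-approximates D, let T' be an MST under D' with edges e'₁,…,e'_{n-1} sorted by increasing D'-weight, and let T be any spanning tree. Then there is a sequence of spanning trees T = T₀, T₁, …, T_{n-1} = T' where Tᵢ is obtained from T_{i-1} by inserting e'ᵢ and deleting an edge eᵢ of the created cycle with D'(e'ᵢ) ≤ D'(eᵢ); consequently D(e'ᵢ) ≤ (1+ε)D(eᵢ) for every i, and weight_D(T') ≤ (1+ε)·weight_D(T). -/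
open scoped Classical

set_option linter.unusedSectionVars false
set_option maxHeartbeats 1600000

namespace MstAux

open SimpleGraph

variable {V : Type*} [Fintype V] [DecidableEq V]

lemma sym2_cases (g : Sym2 V) : ∃ u v : V, g = s(u, v) := by
  induction g using Sym2.ind with
  | _ u v => exact ⟨u, v, rfl⟩

lemma two_paths_absurd {H : SimpleGraph V} (hH : H.IsAcyclic) {x y : V}
    (hadj : H.Adj x y) (q : H.Walk x y) (hq : q.IsPath) (hne : s(x, y) ∉ q.edges) : False := by
  have h := hH.path_unique ⟨q, hq⟩ (SimpleGraph.Path.singleton hadj)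
  apply hne
  have hq' : q = (SimpleGraph.Path.singleton hadj : H.Walk x y) := congrArg Subtype.val h
  rw [hq']
  simp [SimpleGraph.Path.singleton]

lemma path_unique_absurd {A : SimpleGraph V} (hA : A.IsAcyclic) {x y : V}
    (p : A.Walk x y) (hp : p.IsPath) {g : Sym2 V} (hg : g ∈ p.edges)
    (q : A.Walk x y) (hq : q.IsPath) (hgq : g ∉ q.edges) : False := by
  have h := hA.path_unique ⟨p, hp⟩ ⟨q, hq⟩
  have h' : p = q := congrArg Subtype.val h
  rw [h'] at hg
  exact hgq hg

lemma treeWeight_nonneg {w : Sym2 V → ℝ} (hw : ∀ e, 0 ≤ w e) (G : SimpleGraph V) :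
    0 ≤ treeWeight w G :=
  Finset.sum_nonneg fun e _ => hw e

lemma treeWeight_swap {w : Sym2 V → ℝ} {G B : SimpleGraph V} {a b : Sym2 V}
    (ha : a ∉ G.edgeSet) (hb : b ∈ G.edgeSet)
    (hE : B.edgeSet = insert a (G.edgeSet \ {b})) :
    treeWeight w B = treeWeight w G + w a - w b := by
  have hfin : (Set.toFinite B.edgeSet).toFinset
      = insert a (((Set.toFinite G.edgeSet).toFinset).erase b) := by
    ext e
    simp only [Set.Finite.mem_toFinset, hE, Set.mem_insert_iff, Set.mem_diff,
      Set.mem_singleton_iff, Finset.mem_insert, Finset.mem_erase]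
    tauto
  have hnotmem : a ∉ ((Set.toFinite G.edgeSet).toFinset).erase b := by
    simp only [Finset.mem_erase, Set.Finite.mem_toFinset]
    tauto
  have hsum := Finset.add_sum_erase ((Set.toFinite G.edgeSet).toFinset) w
    (by simpa [Set.Finite.mem_toFinset] using hb)
  rw [treeWeight, hfin, Finset.sum_insert hnotmem]
  unfold treeWeight
  linarith

lemma single_diff_diag {a b : V} (hab : a ≠ b) :
    ({s(a, b)} : Set (Sym2 V)) \ Sym2.diagSet = {s(a, b)} := by
  ext e
  simp only [Set.mem_diff, Set.mem_singleton_iff, Sym2.mem_diagSet, and_iff_left_iff_imp]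
  rintro rfl
  simp [Sym2.mk_isDiag_iff, hab]

lemma swap_tree {A : SimpleGraph V} (hA : A.IsTree) {x y : V}
    (hnadj : ¬ A.Adj x y) (hxy : x ≠ y) (p : A.Walk x y) (hp : p.IsPath)
    {g : Sym2 V} (hg : g ∈ p.edges) :
    ∃ B : SimpleGraph V, B.IsTree ∧ B.edgeSet = insert s(x, y) (A.edgeSet \ {g}) := by
  have hgA : g ∈ A.edgeSet := p.edges_subset_edgeSet hg
  have hxyA : s(x, y) ∉ A.edgeSet := fun h => hnadj (A.mem_edgeSet.mp h)
  obtain ⟨u, v, rfl⟩ := sym2_cases g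
  have hAuv : A.Adj u v := p.adj_of_mem_edges hg
  have huv : u ≠ v := hAuv.ne
  set C := A ⊔ SimpleGraph.fromEdgeSet {s(x, y)} with hC
  have hAC : A ≤ C := le_sup_left
  have hCedge : C.edgeSet = insert s(x, y) A.edgeSet := by
    rw [hC, edgeSet_sup, edgeSet_fromEdgeSet, single_diff_diag hxy]
    rw [Set.union_singleton]
  have hCadj : C.Adj y x := by
    rw [← C.mem_edgeSet, Sym2.eq_swap, hCedge]
    exact Set.mem_insert _ _
  have hxyg : s(x, y) ≠ s(u, v) := fun h => hxyA (h ▸ hgA)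
  have hpsub : ∀ e ∈ p.edges, e ∈ C.edgeSet := fun e he =>
    hCedge ▸ Set.mem_insert_of_mem _ (p.edges_subset_edgeSet he)
  have hpCedges : (p.transfer C hpsub).edges = p.edges := p.edges_transfer hpsub
  have hpCpath : (p.transfer C hpsub).IsPath := hp.transfer hpsub
  have hxynotin : s(y, x) ∉ (p.transfer C hpsub).edges := by
    rw [hpCedges, Sym2.eq_swap]
    exact fun h => hxyA (p.edges_subset_edgeSet h)
  have hcyc : (SimpleGraph.Walk.cons hCadj (p.transfer C hpsub)).IsCycle :=
    SimpleGraph.Path.cons_isCycle ⟨p.transfer C hpsub, hpCpath⟩ hCadj hxynotin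
  have hgc : s(u, v) ∈ (SimpleGraph.Walk.cons hCadj (p.transfer C hpsub)).edges := by
    rw [SimpleGraph.Walk.edges_cons]
    exact List.mem_cons_of_mem _ (hpCedges ▸ hg)
  have hreach : (C \ SimpleGraph.fromEdgeSet {s(u, v)}).Reachable u v :=
    ((SimpleGraph.adj_and_reachable_delete_edges_iff_exists_cycle).mpr
      ⟨y, _, hcyc, hgc⟩).2
  set B := C \ SimpleGraph.fromEdgeSet {s(u, v)} with hB
  have hBedge : B.edgeSet = insert s(x, y) (A.edgeSet \ {s(u, v)}) := by
    rw [hB, edgeSet_sdiff, edgeSet_fromEdgeSet, single_diff_diag huv, hCedge,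
      ← Set.insert_diff_singleton_comm hxyg]
  have hCconn : C.Connected := hA.isConnected.mono hAC
  have key : ∀ (a b : V), C.Walk a b → B.Reachable a b := by
    intro a b w
    induction w with
    | nil => exact SimpleGraph.Reachable.refl _
    | @cons a c b h w ih =>
      refine SimpleGraph.Reachable.trans ?_ ih
      by_cases he : s(a, c) = s(u, v)
      · rw [Sym2.eq_iff] at he
        rcases he with ⟨rfl, rfl⟩ | ⟨rfl, rfl⟩
        · exact hreach
        · exact hreach.symm
      · refine SimpleGraph.Adj.reachable ?_
        rw [hB, SimpleGraph.sdiff_adj]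
        refine ⟨h, fun hf => he ?_⟩
        exact Set.mem_singleton_iff.mp ((SimpleGraph.fromEdgeSet_adj _).mp hf).1
  have hBconn : B.Connected := by
    have hne := hCconn.nonempty
    refine SimpleGraph.Connected.mk fun a b => ?_
    obtain ⟨w⟩ := hCconn.preconnected a b
    exact key a b w
  have hBacyc : B.IsAcyclic := by
    intro w0 c0 hc0
    by_cases hxyc : s(x, y) ∈ c0.edges
    · have hreach2 := ((SimpleGraph.adj_and_reachable_delete_edges_iff_exists_cycle
          (G := B)).mpr ⟨w0, c0, hc0, hxyc⟩).2
      have hle : (B \ SimpleGraph.fromEdgeSet {s(x, y)})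
          ≤ A \ SimpleGraph.fromEdgeSet {s(u, v)} := by
        rw [← edgeSet_subset_edgeSet, edgeSet_sdiff, edgeSet_fromEdgeSet,
          single_diff_diag hxy, hBedge, edgeSet_sdiff, edgeSet_fromEdgeSet,
          single_diff_diag huv]
        rintro e ⟨he1, he2⟩
        rcases Set.mem_insert_iff.mp he1 with rfl | he3
        · exact absurd rfl he2
        · exact he3
      have hreach3 := hreach2.mono hle
      obtain ⟨w1⟩ := hreach3
      have hqedges : ∀ e ∈ (w1.toPath : (A \ SimpleGraph.fromEdgeSet {s(u, v)}).Walk x y).edges,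
          e ∈ A.edgeSet := by
        intro e he
        have h1 := SimpleGraph.Walk.edges_subset_edgeSet _ he
        rw [edgeSet_sdiff, edgeSet_fromEdgeSet, single_diff_diag huv] at h1
        exact h1.1
      refine path_unique_absurd hA.IsAcyclic p hp hg
        ((w1.toPath : (A \ SimpleGraph.fromEdgeSet {s(u, v)}).Walk x y).transfer A hqedges)
        ((w1.toPath.2).transfer hqedges) ?_
      rw [SimpleGraph.Walk.edges_transfer]
      intro hmem
      have h1 := SimpleGraph.Walk.edges_subset_edgeSet _ hmem
      rw [edgeSet_sdiff, edgeSet_fromEdgeSet, single_diff_diag huv] at h1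
      exact h1.2 rfl
    · have hsub : ∀ e ∈ c0.edges, e ∈ A.edgeSet := by
        intro e he
        have h1 := c0.edges_subset_edgeSet he
        rw [hBedge] at h1
        rcases Set.mem_insert_iff.mp h1 with rfl | h2
        · exact absurd he hxyc
        · exact h2.1
      exact hA.IsAcyclic _ (hc0.transfer hsub)
  exact ⟨B, ⟨hBconn, hBacyc⟩, hBedge⟩

end MstAux

/-- Exchange argument for spanning trees: if `D'` ε-approximates `D`, `T'` is a
minimum spanning tree under `D'` whose edges `e' 0, …, e' (n-2)` are sorted by
increasing `D'`-weight, and `T` is any spanning tree, then there is a sequence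
of spanning trees `Ts 0 = T, …, Ts (n-1) = T'` where each `Ts (i+1)` is
obtained from `Ts i` by inserting `e' i` and deleting an edge `e i` of `Ts i`
with `D'(e' i) ≤ D'(e i)`; consequently `D(e' i) ≤ (1+ε)·D(e i)` for every `i`,
and the `D`-weight of `T'` is at most `(1+ε)` times that of `T`. -/
theorem mst_exchange {V : Type*} [Fintype V] [DecidableEq V]
    (n : ℕ) (hn : n = Fintype.card V) (hn1 : 1 ≤ n)
    (ε : ℝ) (hε : 0 < ε) (D D' : Sym2 V → ℝ)
    (hDnonneg : ∀ e, 0 ≤ D e) (hD'nonneg : ∀ e, 0 ≤ D' e)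
    (happrox : ∀ a b : Sym2 V, D' a ≤ D' b → D a ≤ (1 + ε) * D b)
    (T T' : SimpleGraph V) (hT : T.IsTree) (hT' : T'.IsTree)
    (hmin' : ∀ G : SimpleGraph V, G.IsTree → treeWeight D' T' ≤ treeWeight D' G)
    (e' : Fin (n - 1) → Sym2 V) (he'inj : Function.Injective e')
    (he'range : T'.edgeSet = Set.range e')
    (hsorted : ∀ i j : Fin (n - 1), i ≤ j → D' (e' i) ≤ D' (e' j)) :
    (∃ (Ts : Fin (n - 1 + 1) → SimpleGraph V) (e : Fin (n - 1) → Sym2 V),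
      Ts 0 = T ∧ Ts (Fin.last (n - 1)) = T' ∧
      (∀ i : Fin (n - 1 + 1), (Ts i).IsTree) ∧
      (∀ i : Fin (n - 1),
        e i ∈ (Ts i.castSucc).edgeSet ∧
        (Ts i.succ).edgeSet = insert (e' i) ((Ts i.castSucc).edgeSet \ {e i}) ∧
        D' (e' i) ≤ D' (e i) ∧
        D (e' i) ≤ (1 + ε) * D (e i))) ∧
    treeWeight D T' ≤ (1 + ε) * treeWeight D T := by
  classical
  have hVne : Nonempty V := Fintype.card_pos_iff.mp (by omega)
  obtain ⟨v₀⟩ := hVne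
  set f : ℕ → Sym2 V := fun i => if h : i < n - 1 then e' ⟨i, h⟩ else s(v₀, v₀) with hf
  have key : ∀ k, k ≤ n - 1 → ∃ (Ts : ℕ → SimpleGraph V) (e : ℕ → Sym2 V),
      Ts 0 = T ∧
      (∀ i, i ≤ k → (Ts i).IsTree ∧
        (∀ j : Fin (n - 1), (j : ℕ) < i → e' j ∈ (Ts i).edgeSet) ∧
        (Ts i).edgeSet ⊆ T.edgeSet ∪ T'.edgeSet ∧
        T.edgeSet ∩ T'.edgeSet ⊆ (Ts i).edgeSet ∧
        treeWeight D (Ts i) ≤ treeWeight D T +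
          ε * ∑ x ∈ (Set.toFinite (T.edgeSet \ (Ts i).edgeSet)).toFinset, D x) ∧
      (∀ i, i < k → e i ∈ (Ts i).edgeSet ∧
        (Ts (i + 1)).edgeSet = insert (f i) ((Ts i).edgeSet \ {e i}) ∧
        D' (f i) ≤ D' (e i)) := by
    intro k
    induction k with
    | zero =>
      intro _
      refine ⟨fun _ => T, fun _ => s(v₀, v₀), rfl, ?_, ?_⟩
      · intro i hi
        refine ⟨hT, ?_, Set.subset_union_left, Set.inter_subset_left, ?_⟩
        · intro j hj
          exact absurd hj (by omega)
        · have h0 : 0 ≤ ε * ∑ x ∈ (Set.toFinite (T.edgeSet \ T.edgeSet)).toFinset, D x :=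
            mul_nonneg hε.le (Finset.sum_nonneg fun _ _ => hDnonneg _)
          linarith
      · intro i hi
        exact absurd hi (by omega)
    | succ k ih =>
      intro hk1
      obtain ⟨Ts, e, h0, hinv, hstep⟩ := ih (Nat.le_of_succ_le hk1)
      have hkN : k < n - 1 := hk1
      obtain ⟨htree, hI2, hI3, hI4, hI5⟩ := hinv k le_rfl
      have hfk : f k = e' ⟨k, hkN⟩ := by simp only [hf]; exact dif_pos hkN
      have hfkT' : f k ∈ T'.edgeSet := by
        rw [hfk, he'range]
        exact Set.mem_range_self _
      by_cases hmem : f k ∈ (Ts k).edgeSet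
      · -- trivial step: e' k is already present
        refine ⟨fun m => if m ≤ k then Ts m else Ts k,
          Function.update e k (f k), ?_, ?_, ?_⟩
        · simpa using h0
        · intro i hi
          by_cases hik : i ≤ k
          · simp only [if_pos hik]
            exact hinv i hik
          · have hieq : i = k + 1 := by omega
            simp only [if_neg hik]
            refine ⟨htree, ?_, hI3, hI4, hI5⟩
            intro j hj
            rcases Nat.lt_succ_iff_lt_or_eq.mp (by omega : (j : ℕ) < k + 1) with hj' | hj'
            · exact hI2 j hj'
            · have hjeq : j = ⟨k, hkN⟩ := Fin.ext hj'
              rw [hjeq, ← hfk]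
              exact hmem
        · intro i hi
          by_cases hik : i < k
          · have h1 : i ≤ k := hik.le
            have h2 : i + 1 ≤ k := hik
            simp only [if_pos h1, if_pos h2, Function.update_of_ne (show i ≠ k by omega)]
            exact hstep i hik
          · have hieq : i = k := by omega
            subst hieq
            simp only [if_pos (le_refl i), if_neg (show ¬ i + 1 ≤ i by omega),
              Function.update_self]
            refine ⟨hmem, ?_, le_refl _⟩
            rw [Set.insert_diff_singleton, Set.insert_eq_self.mpr hmem]
      · -- swap step
        obtain ⟨x, y, hxyeq⟩ := MstAux.sym2_cases (f k)
        have hT'adj : T'.Adj x y := T'.mem_edgeSet.mp (hxyeq ▸ hfkT')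
        have hxy : x ≠ y := hT'adj.ne
        have hnadj : ¬ (Ts k).Adj x y := fun h => hmem (by
          rw [hxyeq]; exact (Ts k).mem_edgeSet.mpr h)
        obtain ⟨w⟩ := htree.isConnected.preconnected x y
        have hex : ∃ g ∈ (w.toPath : (Ts k).Walk x y).edges, g ∉ T'.edgeSet := by
          by_contra hcon
          push_neg at hcon
          refine MstAux.two_paths_absurd hT'.IsAcyclic hT'adj
            ((w.toPath : (Ts k).Walk x y).transfer T' hcon) (w.toPath.2.transfer hcon) ?_
          rw [SimpleGraph.Walk.edges_transfer]
          intro hmem2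
          refine hmem ?_
          rw [hxyeq]
          exact SimpleGraph.Walk.edges_subset_edgeSet _ hmem2
        obtain ⟨g, hgp, hgT'⟩ := hex
        have hgTs : g ∈ (Ts k).edgeSet := SimpleGraph.Walk.edges_subset_edgeSet _ hgp
        have hD'g : D' (f k) ≤ D' g := by
          by_contra hlt
          push_neg at hlt
          obtain ⟨u, v, huveq⟩ := MstAux.sym2_cases g
          have hGuv : (Ts k).Adj u v := (Ts k).mem_edgeSet.mp (huveq ▸ hgTs)
          have huv : u ≠ v := hGuv.ne
          have hnadjT' : ¬ T'.Adj u v := fun h => hgT' (by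
            rw [huveq]; exact T'.mem_edgeSet.mpr h)
          obtain ⟨w2⟩ := hT'.isConnected.preconnected u v
          have hqsub : ∀ ff ∈ (w2.toPath : T'.Walk u v).edges, ff ∈ (Ts k).edgeSet := by
            intro ff hff
            have hffT' : ff ∈ T'.edgeSet := SimpleGraph.Walk.edges_subset_edgeSet _ hff
            obtain ⟨B, hBtree, hBedge⟩ :=
              MstAux.swap_tree hT' hnadjT' huv (w2.toPath : T'.Walk u v) w2.toPath.2 hff
            have hwB := MstAux.treeWeight_swap (w := D') (huveq ▸ hgT') hffT' hBedge
            have hminB := hmin' B hBtree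
            have hD'ff : D' ff ≤ D' s(u, v) := by linarith
            obtain ⟨j, hj⟩ := (show ff ∈ Set.range e' by rw [← he'range]; exact hffT')
            have hjk : (j : ℕ) < k := by
              by_contra hge
              push_neg at hge
              have hle2 : D' (f k) ≤ D' (e' j) := by
                rw [hfk]
                exact hsorted ⟨k, hkN⟩ j (Fin.le_def.mpr hge)
              have hgs : D' g = D' s(u, v) := by rw [huveq]
              rw [hj] at hle2
              linarith
            have hmemj := hI2 j hjk
            rw [hj] at hmemj
            exact hmemj
          refine MstAux.two_paths_absurd htree.IsAcyclic hGuv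
            ((w2.toPath : T'.Walk u v).transfer (Ts k) hqsub) (w2.toPath.2.transfer hqsub) ?_
          rw [SimpleGraph.Walk.edges_transfer]
          intro hmem3
          refine hgT' ?_
          rw [huveq]
          exact SimpleGraph.Walk.edges_subset_edgeSet _ hmem3
        obtain ⟨B, hBtree, hBedge⟩ :=
          MstAux.swap_tree htree hnadj hxy (w.toPath : (Ts k).Walk x y) w.toPath.2 hgp
        rw [← hxyeq] at hBedge
        have hfkNotT : f k ∉ T.edgeSet := fun h => hmem (hI4 ⟨h, hfkT'⟩)
        have hgT : g ∈ T.edgeSet := by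
          rcases hI3 hgTs with h | h
          · exact h
          · exact absurd h hgT'
        have hDfk : D (f k) ≤ (1 + ε) * D g := happrox _ _ hD'g
        have hwB : treeWeight D B = treeWeight D (Ts k) + D (f k) - D g :=
          MstAux.treeWeight_swap hmem hgTs hBedge
        have hdiff : (Set.toFinite (T.edgeSet \ B.edgeSet)).toFinset
            = insert g ((Set.toFinite (T.edgeSet \ (Ts k).edgeSet)).toFinset) := by
          ext a
          simp only [Set.Finite.mem_toFinset, Set.mem_diff, hBedge, Set.mem_insert_iff,
            Finset.mem_insert, Set.mem_singleton_iff]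
          constructor
          · rintro ⟨haT, hnot⟩
            by_cases hag : a = g
            · exact Or.inl hag
            · exact Or.inr ⟨haT, fun haTs => hnot (Or.inr ⟨haTs, hag⟩)⟩
          · rintro (rfl | ⟨haT, hnot⟩)
            · refine ⟨hgT, fun hin => ?_⟩
              rcases hin with h | ⟨-, hne⟩
              · exact hfkNotT (h ▸ hgT)
              · exact hne rfl
            · refine ⟨haT, fun hin => ?_⟩
              rcases hin with h | ⟨hTs2, -⟩
              · exact hfkNotT (h ▸ haT)
              · exact hnot hTs2
        have hgnot : g ∉ (Set.toFinite (T.edgeSet \ (Ts k).edgeSet)).toFinset := by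
          simp only [Set.Finite.mem_toFinset, Set.mem_diff, not_and, not_not]
          intro _
          exact hgTs
        have hsumdiff : ∑ x ∈ (Set.toFinite (T.edgeSet \ B.edgeSet)).toFinset, D x
            = D g + ∑ x ∈ (Set.toFinite (T.edgeSet \ (Ts k).edgeSet)).toFinset, D x := by
          rw [hdiff, Finset.sum_insert hgnot]
        refine ⟨fun m => if m ≤ k then Ts m else B,
          Function.update e k g, ?_, ?_, ?_⟩
        · simpa using h0
        · intro i hi
          by_cases hik : i ≤ k
          · simp only [if_pos hik]
            exact hinv i hik
          · have hieq : i = k + 1 := by omega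
            simp only [if_neg hik]
            refine ⟨hBtree, ?_, ?_, ?_, ?_⟩
            · intro j hj
              rcases Nat.lt_succ_iff_lt_or_eq.mp (by omega : (j : ℕ) < k + 1) with hj' | hj'
              · rw [hBedge]
                refine Set.mem_insert_of_mem _ ⟨hI2 j hj', ?_⟩
                simp only [Set.mem_singleton_iff]
                intro hcon
                refine hgT' ?_
                rw [← hcon, he'range]
                exact Set.mem_range_self _
              · have hjeq : j = ⟨k, hkN⟩ := Fin.ext hj'
                rw [hBedge, hjeq, ← hfk]
                exact Set.mem_insert _ _
            · rw [hBedge]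
              intro a ha
              rcases Set.mem_insert_iff.mp ha with rfl | h1
              · exact Or.inr hfkT'
              · exact hI3 h1.1
            · intro a ha
              rw [hBedge]
              refine Set.mem_insert_of_mem _ ⟨hI4 ha, ?_⟩
              simp only [Set.mem_singleton_iff]
              intro hcon
              exact hgT' (hcon ▸ ha.2)
            · rw [hwB, hsumdiff]
              have hexp : ε * (D g + ∑ x ∈ (Set.toFinite (T.edgeSet \ (Ts k).edgeSet)).toFinset, D x)
                  = ε * D g + ε * ∑ x ∈ (Set.toFinite (T.edgeSet \ (Ts k).edgeSet)).toFinset, D x := by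
                ring
              rw [hexp]
              linarith
        · intro i hi
          by_cases hik : i < k
          · have h1 : i ≤ k := hik.le
            have h2 : i + 1 ≤ k := hik
            simp only [if_pos h1, if_pos h2, Function.update_of_ne (show i ≠ k by omega)]
            exact hstep i hik
          · have hieq : i = k := by omega
            subst hieq
            simp only [if_pos (le_refl i), if_neg (show ¬ i + 1 ≤ i by omega),
              Function.update_self]
            exact ⟨hgTs, hBedge, hD'g⟩
  obtain ⟨Ts, e, h0, hinv, hstep⟩ := key (n - 1) le_rfl
  obtain ⟨htreeN, hI2N, -, -, hI5N⟩ := hinv (n - 1) le_rfl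
  have hTsN : Ts (n - 1) = T' := by
    have hsub : T'.edgeSet ⊆ (Ts (n - 1)).edgeSet := by
      rw [he'range]
      rintro a ⟨j, rfl⟩
      exact hI2N j j.isLt
    have hle : T' ≤ Ts (n - 1) := SimpleGraph.edgeSet_subset_edgeSet.mp hsub
    have h1 : T'.edgeFinset ⊆ (Ts (n - 1)).edgeFinset := SimpleGraph.edgeFinset_mono hle
    have hc1 := hT'.card_edgeFinset
    have hc2 := htreeN.card_edgeFinset
    have heq := Finset.eq_of_subset_of_card_le h1 (by omega)
    exact (SimpleGraph.edgeFinset_inj.mp heq).symm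
  have hWfinal : treeWeight D T' ≤ (1 + ε) * treeWeight D T := by
    rw [← hTsN]
    have hsum_le : ∑ x ∈ (Set.toFinite (T.edgeSet \ (Ts (n - 1)).edgeSet)).toFinset, D x
        ≤ treeWeight D T := by
      refine Finset.sum_le_sum_of_subset_of_nonneg ?_ (fun i _ _ => hDnonneg i)
      intro a ha
      simp only [Set.Finite.mem_toFinset, Set.mem_diff] at ha ⊢
      exact ha.1
    nlinarith [hI5N, hsum_le]
  refine ⟨⟨fun i => Ts i.val, fun i => e i.val, ?_, ?_, ?_, ?_⟩, hWfinal⟩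
  · simpa using h0
  · simpa using hTsN
  · intro i
    exact (hinv i.val (Nat.lt_succ_iff.mp i.isLt)).1
  · intro i
    have hi : (i : ℕ) < n - 1 := i.isLt
    obtain ⟨ha, hb, hc⟩ := hstep i.val hi
    have hfi : f i.val = e' i := by
      simp only [hf]
      rw [dif_pos hi]
    refine ⟨?_, ?_, ?_, ?_⟩
    · show e i.val ∈ (Ts (i.castSucc).val).edgeSet
      rw [Fin.coe_castSucc]
      exact ha
    · show (Ts (i.succ).val).edgeSet = insert (e' i) ((Ts (i.castSucc).val).edgeSet \ {e i.val})
      rw [Fin.val_succ, Fin.coe_castSucc, ← hfi]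
      exact hb
    · rw [← hfi]
      exact hc
    · rw [← hfi]
      exact happrox _ _ hc
end

section
/- If T_opt is a minimum spanning tree of P under distance D and T is a spanning tree with weight_D(T) > (1+ε)·weight_D(T_opt), then there exists an edge φ of T_opt such that (1+ε)·D(φ) < D(out(T,φ)), where out(T,φ) is the heaviest (under D) edge of the cycle created by inserting φ into T. -/
open scoped Classical

namespace MSTAux

open SimpleGraph

variable {V : Type*}

/-- After deleting a bridge `pq`, every vertex still reaches `p` or `q`. -/
lemma reach_p_or_q {Θ : SimpleGraph V} (hc : Θ.Connected) {p q : V}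
    (hpq : ¬(Θ \ fromEdgeSet {s(p, q)}).Reachable p q) (v : V) :
    (Θ \ fromEdgeSet {s(p, q)}).Reachable v p ∨
      (Θ \ fromEdgeSet {s(p, q)}).Reachable v q := by
  classical
  have htrans : ∀ {x y : V} (w : Θ.Walk x y), s(p, q) ∉ w.edges →
      (Θ \ fromEdgeSet {s(p, q)}).Reachable x y := by
    intro x y w hw
    refine ⟨w.transfer _ fun e he => ?_⟩
    simp only [edgeSet_sdiff, edgeSet_fromEdgeSet, edgeSet_sdiff_sdiff_isDiag,
      Set.mem_diff, Set.mem_singleton_iff]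
    exact ⟨w.edges_subset_edgeSet he, fun h => hw (h ▸ he)⟩
  obtain ⟨W0⟩ := hc.preconnected v p
  set W : Θ.Walk v p := W0.toPath.val with hWdef
  have hWpath : W.IsPath := W0.toPath.2
  by_cases h : s(p, q) ∈ W.edges
  · have hq : q ∈ W.support := W.snd_mem_support_of_mem_edges h
    by_cases h1 : s(p, q) ∈ (W.takeUntil q hq).edges
    · exfalso
      apply hpq
      have hnodup : W.edges.Nodup := hWpath.isTrail.edges_nodup
      have hspec := W.take_spec hq
      have h2 : s(p, q) ∉ (W.dropUntil q hq).edges := by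
        rw [← hspec, Walk.edges_append] at hnodup
        exact fun h2 => (List.disjoint_of_nodup_append hnodup) h1 h2
      exact (htrans (W.dropUntil q hq) h2).symm
    · exact Or.inr (htrans (W.takeUntil q hq) h1)
  · exact Or.inl (htrans W h)

/-- Swapping a bridge `pq` for an edge `ab` crossing the corresponding cut
yields a tree. -/
lemma exchange_isTree {Θ : SimpleGraph V} (hΘ : Θ.IsTree) {p q a b : V}
    (hadj : Θ.Adj p q) (hne : a ≠ b)
    (haS : (Θ \ fromEdgeSet {s(p, q)}).Reachable p a)
    (hbS : ¬(Θ \ fromEdgeSet {s(p, q)}).Reachable p b) :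
    ((Θ \ fromEdgeSet {s(p, q)}) ⊔ fromEdgeSet {s(a, b)}).IsTree := by
  classical
  have hpq : ¬(Θ \ fromEdgeSet {s(p, q)}).Reachable p q :=
    isAcyclic_iff_forall_adj_isBridge.mp hΘ.IsAcyclic hadj
  have hab : ¬(Θ \ fromEdgeSet {s(p, q)}).Reachable a b :=
    fun h => hbS (haS.trans h)
  set G' := (Θ \ fromEdgeSet {s(p, q)}) ⊔ fromEdgeSet {s(a, b)} with hG'
  have hle : (Θ \ fromEdgeSet {s(p, q)}) ≤ G' := le_sup_left
  have hG'ab : G'.Adj a b := by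
    have : (fromEdgeSet {s(a, b)}).Adj a b := (fromEdgeSet_adj _).mpr ⟨rfl, hne⟩
    exact (sup_adj _ _ _ _).mpr (Or.inr this)
  have hpq' : G'.Reachable p q := by
    rcases reach_p_or_q hΘ.isConnected hpq a with h1 | h1 <;>
      rcases reach_p_or_q hΘ.isConnected hpq b with h2 | h2
    · exact absurd (h1.trans h2.symm) hab
    · exact ((h1.symm.mono hle).trans (hG'ab.reachable.trans (h2.mono hle)))
    · exact ((h2.symm.mono hle).trans (hG'ab.symm.reachable.trans (h1.mono hle)))
    · exact absurd (h1.trans h2.symm) hab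
  constructor
  · have hpre : G'.Preconnected := by
      intro u v
      have hlink : ∀ w : V, G'.Reachable w p := by
        intro w
        rcases reach_p_or_q hΘ.isConnected hpq w with h | h
        · exact h.mono hle
        · exact (h.mono hle).trans hpq'.symm
      exact (hlink u).trans (hlink v).symm
    haveI : Nonempty V := ⟨p⟩
    exact Connected.mk hpre
  · intro v c hc
    by_cases hmem : s(a, b) ∈ c.edges
    · have hre := (adj_and_reachable_delete_edges_iff_exists_cycle.mpr ⟨v, c, hc, hmem⟩).2
      apply hab
      refine hre.mono ?_
      intro x y hxy
      change (G' \ fromEdgeSet {s(a, b)}).Adj x y at hxy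
      rw [sdiff_adj] at hxy
      rcases (sup_adj _ _ _ _).mp hxy.1 with h | h
      · exact h
      · exact absurd h hxy.2
    · have hsub : ∀ e ∈ c.edges, e ∈ Θ.edgeSet := by
        intro e he
        have := c.edges_subset_edgeSet he
        rw [hG', edgeSet_sup] at this
        rcases this with h | h
        · rw [edgeSet_sdiff] at h
          exact h.1
        · rw [edgeSet_fromEdgeSet] at h
          exact absurd (h.1 ▸ he : s(a, b) ∈ c.edges) hmem
      exact hΘ.IsAcyclic (c.transfer Θ hsub) (hc.transfer hsub)

end MSTAux

namespace MSTAux2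
open SimpleGraph MSTAux

variable {V : Type*} [Fintype V]

noncomputable def F (G : SimpleGraph V) : Finset (Sym2 V) :=
  (Set.toFinite G.edgeSet).toFinset

lemma mem_F {G : SimpleGraph V} {e : Sym2 V} : e ∈ F G ↔ e ∈ G.edgeSet :=
  Set.Finite.mem_toFinset _

lemma card_F {G : SimpleGraph V} (hG : G.IsTree) : (F G).card = Fintype.card V - 1 := by
  classical
  haveI : Fintype G.edgeSet := (Set.toFinite G.edgeSet).fintype
  have hFe : F G = G.edgeFinset := by
    ext e
    simp [mem_F, mem_edgeFinset]
  have h2 := hG.card_edgeFinset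
  rw [hFe]
  omega

lemma key (ε : ℝ) (hε : 0 < ε) (D : Sym2 V → ℝ) (hD : ∀ e, 0 ≤ D e)
    (T : SimpleGraph V) (hT : T.IsTree) :
    ∀ (k : ℕ) (Θ : SimpleGraph V), Θ.IsTree →
      (∀ p q : V, Θ.Adj p q → ∃ W : T.Walk p q,
        ∀ e ∈ W.edges, D e ≤ (1 + ε) * D s(p, q)) →
      (F Θ \ F T).card = k →
      ∑ e ∈ F T, D e ≤ ∑ e ∈ F Θ, D e + ε * ∑ e ∈ F Θ \ F T, D e := by
  intro k
  induction k with
  | zero =>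
    intro Θ hΘ hH hcard
    have hempty : F Θ \ F T = ∅ := Finset.card_eq_zero.mp hcard
    have hsub : F Θ ⊆ F T := by rwa [Finset.sdiff_eq_empty_iff_subset] at hempty
    have he : F Θ = F T :=
      Finset.eq_of_subset_of_card_le hsub (by rw [card_F hT, card_F hΘ])
    rw [hempty, he]
    simp
  | succ k ih =>
    intro Θ hΘ hH hcard
    obtain ⟨φ, hφ⟩ := Finset.card_pos.mp (by omega : 0 < (F Θ \ F T).card)
    obtain ⟨hφΘ, hφT⟩ := Finset.mem_sdiff.mp hφ
    have hrep : ∃ p q : V, φ = s(p, q) := by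
      induction φ using Sym2.ind with
      | _ x y => exact ⟨x, y, rfl⟩
    obtain ⟨p, q, rfl⟩ := hrep
    have hadj : Θ.Adj p q := Θ.mem_edgeSet.mp (mem_F.mp hφΘ)
    have hbridge : ¬(Θ \ SimpleGraph.fromEdgeSet {s(p, q)}).Reachable p q :=
      isAcyclic_iff_forall_adj_isBridge.mp hΘ.IsAcyclic hadj
    obtain ⟨W, hW⟩ := hH p q hadj
    have hpS : p ∈ {v | (Θ \ SimpleGraph.fromEdgeSet {s(p, q)}).Reachable p v} :=
      Reachable.refl p
    obtain ⟨d, hd, hdfst, hdsnd⟩ := W.exists_boundary_dart _ hpS hbridge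
    set a := d.fst with ha
    set b := d.snd with hb
    have habT : T.Adj a b := d.adj
    have hneab : a ≠ b := habT.ne
    have hedge : s(a, b) ∈ W.edges := List.mem_map_of_mem (f := Dart.edge) hd
    have hDab : D s(a, b) ≤ (1 + ε) * D s(p, q) := hW _ hedge
    have haS : (Θ \ SimpleGraph.fromEdgeSet {s(p, q)}).Reachable p a := hdfst
    have hbS : ¬(Θ \ SimpleGraph.fromEdgeSet {s(p, q)}).Reachable p b := hdsnd
    have habFT : s(a, b) ∈ F T := mem_F.mpr (T.mem_edgeSet.mpr habT)
    have habFΘ : s(a, b) ∉ F Θ := by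
      intro hmem
      have hmem' : Θ.Adj a b := Θ.mem_edgeSet.mp (mem_F.mp hmem)
      by_cases hc : s(a, b) = s(p, q)
      · exact hφT (hc ▸ habFT)
      · apply hbS
        have hadj' : (Θ \ SimpleGraph.fromEdgeSet {s(p, q)}).Adj a b := by
          rw [sdiff_adj]
          exact ⟨hmem', by simp [fromEdgeSet_adj, hc]⟩
        exact haS.trans hadj'.reachable
    have hΘ'tree :
        ((Θ \ SimpleGraph.fromEdgeSet {s(p, q)}) ⊔ SimpleGraph.fromEdgeSet {s(a, b)}).IsTree :=
      exchange_isTree hΘ hadj hneab haS hbS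
    set Θ' := (Θ \ SimpleGraph.fromEdgeSet {s(p, q)}) ⊔ SimpleGraph.fromEdgeSet {s(a, b)}
      with hΘ'def
    have hFΘ' : F Θ' = insert s(a, b) ((F Θ).erase s(p, q)) := by
      ext e
      simp only [mem_F, Finset.mem_insert, Finset.mem_erase, mem_F, hΘ'def,
        edgeSet_sup, edgeSet_sdiff, edgeSet_fromEdgeSet, Set.mem_union,
        Set.mem_diff, Set.mem_singleton_iff, Set.mem_setOf_eq]
      have hd1 : ¬(s(a, b) : Sym2 V).IsDiag := by simp [hneab]
      have hd2 : ¬(s(p, q) : Sym2 V).IsDiag := by simp [hadj.ne]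
      constructor
      · rintro (⟨h1, h2⟩ | ⟨h1, h2⟩)
        · exact Or.inr ⟨fun hc => h2 ⟨hc, hc ▸ hd2⟩, h1⟩
        · exact Or.inl h1
      · rintro (rfl | ⟨h1, h2⟩)
        · exact Or.inr ⟨rfl, hd1⟩
        · exact Or.inl ⟨h2, fun hc => h1 hc.1⟩
    have hsdiff : F Θ' \ F T = (F Θ \ F T).erase s(p, q) := by
      rw [hFΘ']
      ext e
      simp only [Finset.mem_sdiff, Finset.mem_insert, Finset.mem_erase]
      constructor
      · rintro ⟨rfl | ⟨h1, h2⟩, h3⟩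
        · exact absurd habFT h3
        · exact ⟨h1, h2, h3⟩
      · rintro ⟨h1, h2, h3⟩
        exact ⟨Or.inr ⟨h1, h2⟩, h3⟩
    have hcard' : (F Θ' \ F T).card = k := by
      rw [hsdiff, Finset.card_erase_of_mem hφ, hcard]
      omega
    have hH' : ∀ x y : V, Θ'.Adj x y → ∃ W : T.Walk x y,
        ∀ e ∈ W.edges, D e ≤ (1 + ε) * D s(x, y) := by
      intro x y hxy
      have hmem : s(x, y) ∈ F Θ' := mem_F.mpr (Θ'.mem_edgeSet.mpr hxy)
      rw [hFΘ'] at hmem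
      rcases Finset.mem_insert.mp hmem with hc | hc
      · have hxyT : T.Adj x y := T.mem_edgeSet.mp (by rw [hc]; exact T.mem_edgeSet.mpr habT)
        refine ⟨Walk.cons hxyT Walk.nil, ?_⟩
        intro e he
        simp only [Walk.edges_cons, Walk.edges_nil, List.mem_singleton] at he
        subst he
        nlinarith [hD s(x, y)]
      · exact hH x y (Θ.mem_edgeSet.mp (mem_F.mp (Finset.mem_erase.mp hc).2))
    have hIH := ih Θ' hΘ'tree hH' hcard'
    have hsum1 : ∑ e ∈ F Θ', D e
        = D s(a, b) + (∑ e ∈ F Θ, D e - D s(p, q)) := by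
      rw [hFΘ', Finset.sum_insert (by simp [Finset.mem_erase, habFΘ]),
        Finset.sum_erase_eq_sub hφΘ]
    have hsum3 : ∑ e ∈ F Θ' \ F T, D e
        = ∑ e ∈ F Θ \ F T, D e - D s(p, q) := by
      rw [hsdiff, Finset.sum_erase_eq_sub hφ]
    rw [hsum1, hsum3] at hIH
    linarith [hIH, hDab]

end MSTAux2

open MSTAux MSTAux2 SimpleGraph in
/-- If `Topt` is a minimum spanning tree under `D` and `T` is a spanning tree
with `weight_D(T) > (1+ε)·weight_D(Topt)`, then some edge `φ = pq` of `Topt`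
satisfies `(1+ε)·D(φ) < D(e)` for some edge `e` of the `T`-path between `p` and
`q` (the cycle created by inserting `φ` into `T`); in particular this holds for
the heaviest edge `out(T,φ)` of that cycle. -/
theorem exists_improving_edge {V : Type*} [Fintype V] (ε : ℝ) (hε : 0 < ε)
    (D : Sym2 V → ℝ) (hD : ∀ e, 0 ≤ D e)
    (T Topt : SimpleGraph V) (hT : T.IsTree) (hTopt : Topt.IsTree)
    (hmin : ∀ G : SimpleGraph V, G.IsTree → treeWeight D Topt ≤ treeWeight D G)
    (hheavy : (1 + ε) * treeWeight D Topt < treeWeight D T) :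
    ∃ p q : V, Topt.Adj p q ∧
      ∀ (W : T.Walk p q), W.IsPath →
        ∃ e ∈ W.edges, (1 + ε) * D s(p, q) < D e := by
  by_contra hcon
  push_neg at hcon
  have hH : ∀ p q : V, Topt.Adj p q → ∃ W : T.Walk p q,
      ∀ e ∈ W.edges, D e ≤ (1 + ε) * D s(p, q) := by
    intro p q h
    obtain ⟨W, _, hW⟩ := hcon p q h
    exact ⟨W, hW⟩
  have hkey := key ε hε D hD T hT (F Topt \ F T).card Topt hTopt hH rfl
  have hwT : treeWeight D T = ∑ e ∈ F T, D e := rfl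
  have hwO : treeWeight D Topt = ∑ e ∈ F Topt, D e := rfl
  rw [hwT, hwO] at hheavy
  have hsub : ∑ e ∈ F Topt \ F T, D e ≤ ∑ e ∈ F Topt, D e :=
    Finset.sum_le_sum_of_subset_of_nonneg (Finset.sdiff_subset) fun i _ _ => hD i
  nlinarith [hkey, hsub, hε.le]
end
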